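/- Let n be a positive integer, let ρ and σ be n×n positive definite complex matrices with trace 1, and let s > 0. For a unitary U write B_U = (U*σU)^{-1/2}. Then for every unitary U, Tr[ (U*σU) (B_U ρ B_U + sI)⁻¹ ] ≥ Σ_{i=1}^n λ↓ᵢ(σ)² / (λ↓ᵢ(ρ) + s·λ↓ᵢ(σ)), and equality holds for U = W↓ V↓*; hence this value is the minimum over the unitary group and it is attained at W↓ V↓*. -/

import Mathlib

open Matrix
open scoped ComplexOrder Classical

/-- The positive semidefinite square root of a matrix (junk value `0` if the matrix is
not positive semidefinite). -/
noncomputable def msqrt {n : ℕ} (A : Matrix (Fin n) (Fin n) ℂ) : Matrix (Fin n) (Fin n) ℂ :=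
  if h : A.PosSemidef then
    (h.1.eigenvectorUnitary : Matrix (Fin n) (Fin n) ℂ) *
      diagonal ((↑) ∘ (fun x : ℝ => Real.sqrt x) ∘ h.1.eigenvalues) *
      (star h.1.eigenvectorUnitary : Matrix (Fin n) (Fin n) ℂ)
  else 0

namespace Stmt6Aux

variable {n : ℕ}

/-! ### Scalar lemmas -/

lemma sum_fin_ite (u : Fin n → ℝ) (k : ℕ) (hk : k ≤ n) :
    (∑ i : Fin n, if (i : ℕ) < k then u i else 0)
      = ∑ j ∈ Finset.range k, (if h : j < n then u ⟨j, h⟩ else 0) := by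
  have h1 : (∑ i : Fin n, if (i : ℕ) < k then u i else 0)
      = ∑ j ∈ Finset.range n,
          (if h : j < n then (if j < k then u ⟨j, h⟩ else 0) else 0) := by
    rw [← Fin.sum_univ_eq_sum_range]
    exact Finset.sum_congr rfl fun i _ => by simp [i.isLt]
  rw [h1, ← Finset.sum_subset (Finset.range_subset_range.mpr hk) ?h0]
  case h0 =>
    intro j hjn hjk
    have : ¬ j < k := by simpa using hjk
    simp [this]
  refine Finset.sum_congr rfl fun j hj => ?_
  have hjk := Finset.mem_range.mp hj
  have hjn : j < n := lt_of_lt_of_le hjk hk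
  simp [hjn, hjk]

lemma weighted_le_topk (k : ℕ) (hk : k ≤ n) (x c : Fin n → ℝ)
    (hx : Antitone x) (hx0 : ∀ i, 0 ≤ x i)
    (hc0 : ∀ i, 0 ≤ c i) (hc1 : ∀ i, c i ≤ 1) (hcs : ∑ i, c i = (k : ℝ)) :
    ∑ i, x i * c i ≤ ∑ i : Fin n, if (i : ℕ) < k then x i else 0 := by
  have hone : (∑ i : Fin n, if (i : ℕ) < k then (1 : ℝ) else 0) = (k : ℝ) := by
    rw [sum_fin_ite (fun _ => (1 : ℝ)) k hk]
    rw [Finset.sum_congr rfl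
      (fun j hj => dif_pos (lt_of_lt_of_le (Finset.mem_range.mp hj) hk))]
    simp
  rcases eq_or_lt_of_le hk with hkn | hklt
  · have hall : ∀ i : Fin n, (i : ℕ) < k := fun i => hkn ▸ i.isLt
    calc ∑ i, x i * c i ≤ ∑ i, x i :=
          Finset.sum_le_sum fun i _ => mul_le_of_le_one_right (hx0 i) (hc1 i)
      _ = ∑ i : Fin n, if (i : ℕ) < k then x i else 0 :=
          Finset.sum_congr rfl fun i _ => (if_pos (hall i)).symm
  · set p : Fin n := ⟨k, hklt⟩ with hp
    have key : ∀ i : Fin n, x i * c i - (if (i : ℕ) < k then x i else 0)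
        ≤ x p * (c i - (if (i : ℕ) < k then (1 : ℝ) else 0)) := by
      intro i
      by_cases hik : (i : ℕ) < k
      · rw [if_pos hik, if_pos hik]
        have hip : i ≤ p := by
          rw [Fin.le_def]; exact le_of_lt hik
        have hxi : x p ≤ x i := hx hip
        have h1 : x i * (c i - 1) ≤ x p * (c i - 1) :=
          mul_le_mul_of_nonpos_right hxi (sub_nonpos.mpr (hc1 i))
        nlinarith [h1]
      · rw [if_neg hik, if_neg hik]
        have hpi : p ≤ i := by
          rw [Fin.le_def]; exact not_lt.mp hik
        have hxi : x i ≤ x p := hx hpi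
        have h1 : x i * c i ≤ x p * c i := mul_le_mul_of_nonneg_right hxi (hc0 i)
        nlinarith [h1]
    have h2 := Finset.sum_le_sum fun i (_ : i ∈ Finset.univ) => key i
    rw [Finset.sum_sub_distrib, ← Finset.mul_sum, Finset.sum_sub_distrib, hcs, hone,
      sub_self, mul_zero] at h2
    linarith

lemma abel_nonpos (f g : ℕ → ℝ) (N : ℕ)
    (hf : ∀ i, i + 1 < N → f i ≤ f (i + 1))
    (hS : ∀ k, k ≤ N → 0 ≤ ∑ i ∈ Finset.range k, g i)
    (hSN : ∑ i ∈ Finset.range N, g i = 0) :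
    ∑ i ∈ Finset.range N, f i * g i ≤ 0 := by
  have H := Finset.sum_range_by_parts f g N
  simp only [smul_eq_mul] at H
  rw [H, hSN, mul_zero, zero_sub, neg_nonpos]
  refine Finset.sum_nonneg fun i hi => ?_
  have hiN : i < N - 1 := Finset.mem_range.mp hi
  have hi1 : i + 1 < N := by omega
  exact mul_nonneg (sub_nonneg.mpr (hf i hi1)) (hS (i + 1) (by omega))

lemma inv_sum_le (v w : Fin n → ℝ) (hv : Antitone v)
    (hv0 : ∀ i, 0 < v i) (hw0 : ∀ i, 0 < w i)
    (hps : ∀ k : ℕ, k ≤ n →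
      (∑ i : Fin n, if (i : ℕ) < k then v i else 0)
        ≤ ∑ i : Fin n, if (i : ℕ) < k then w i else 0)
    (htot : ∑ i, v i = ∑ i, w i) :
    ∑ i, (v i)⁻¹ ≤ ∑ i, (w i)⁻¹ := by
  classical
  have tangent : ∀ i : Fin n, (v i)⁻¹ - (w i)⁻¹
      ≤ ((v i)⁻¹ * (v i)⁻¹) * (w i - v i) := by
    intro i
    have hvi := hv0 i
    have hwi := hw0 i
    have hid : ((v i)⁻¹ * (v i)⁻¹) * (w i - v i) - ((v i)⁻¹ - (w i)⁻¹)
        = (w i - v i) ^ 2 * ((v i)⁻¹ * (v i)⁻¹ * (w i)⁻¹) := by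
      field_simp
    have hpos : (0 : ℝ) ≤ (w i - v i) ^ 2 * ((v i)⁻¹ * (v i)⁻¹ * (w i)⁻¹) := by positivity
    linarith
  set F : ℕ → ℝ := fun j => if h : j < n then (v ⟨j, h⟩)⁻¹ * (v ⟨j, h⟩)⁻¹ else 0 with hF
  set G : ℕ → ℝ := fun j => if h : j < n then w ⟨j, h⟩ - v ⟨j, h⟩ else 0 with hG
  have hfin : (∑ i : Fin n, ((v i)⁻¹ * (v i)⁻¹) * (w i - v i))
      = ∑ j ∈ Finset.range n, F j * G j := by
    rw [← Fin.sum_univ_eq_sum_range (fun j => F j * G j) n]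
    exact Finset.sum_congr rfl fun i _ => by simp [hF, hG, i.isLt]
  have hGsum : ∀ k, k ≤ n → (∑ j ∈ Finset.range k, G j)
      = (∑ i : Fin n, if (i : ℕ) < k then w i else 0)
        - (∑ i : Fin n, if (i : ℕ) < k then v i else 0) := by
    intro k hkn
    rw [sum_fin_ite w k hkn, sum_fin_ite v k hkn, ← Finset.sum_sub_distrib]
    refine Finset.sum_congr rfl fun j hj => ?_
    have hjn : j < n := lt_of_lt_of_le (Finset.mem_range.mp hj) hkn
    simp [hG, hjn]
  have habel : ∑ j ∈ Finset.range n, F j * G j ≤ 0 := by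
    refine abel_nonpos F G n (fun i hi => ?_) (fun k hk => ?_) ?_
    · have hin : i < n := by omega
      have hi1n : i + 1 < n := hi
      simp only [hF, dif_pos hin, dif_pos hi1n]
      have hle : v ⟨i + 1, hi1n⟩ ≤ v ⟨i, hin⟩ := hv (Fin.mk_le_mk.mpr (by omega))
      have h1 : (v ⟨i, hin⟩)⁻¹ ≤ (v ⟨i + 1, hi1n⟩)⁻¹ :=
        one_div (v ⟨i, hin⟩) ▸ one_div (v ⟨i + 1, hi1n⟩) ▸
          one_div_le_one_div_of_le (hv0 _) hle
      have h2 : 0 ≤ (v ⟨i, hin⟩)⁻¹ := le_of_lt (inv_pos.mpr (hv0 _))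
      exact mul_le_mul h1 h1 h2 (le_of_lt (inv_pos.mpr (hv0 _)))
    · rw [hGsum k hk]
      have := hps k hk
      linarith
    · rw [hGsum n le_rfl]
      have hv' : (∑ i : Fin n, if (i : ℕ) < n then v i else 0) = ∑ i, v i :=
        Finset.sum_congr rfl fun i _ => if_pos i.isLt
      have hw' : (∑ i : Fin n, if (i : ℕ) < n then w i else 0) = ∑ i, w i :=
        Finset.sum_congr rfl fun i _ => if_pos i.isLt
      rw [hv', hw', htot, sub_self]
  have h1 : ∑ i : Fin n, ((v i)⁻¹ - (w i)⁻¹) ≤ 0 := by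
    calc ∑ i : Fin n, ((v i)⁻¹ - (w i)⁻¹)
        ≤ ∑ i : Fin n, ((v i)⁻¹ * (v i)⁻¹) * (w i - v i) :=
          Finset.sum_le_sum fun i _ => tangent i
      _ = ∑ j ∈ Finset.range n, F j * G j := hfin
      _ ≤ 0 := habel
  rw [Finset.sum_sub_distrib] at h1
  linarith

/-! ### Matrix helper lemmas -/

lemma conj_diag_apply (V : Matrix (Fin n) (Fin n) ℂ) (f : Fin n → ℂ) (i j : Fin n) :
    (V * diagonal f * Vᴴ) i j = ∑ k, V i k * f k * star (V j k) := by
  rw [Matrix.mul_apply]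
  refine Finset.sum_congr rfl fun k _ => ?_
  rw [Matrix.mul_diagonal, Matrix.conjTranspose_apply]

lemma conj_diag_reindex (V : Matrix (Fin n) (Fin n) ℂ) (f : Fin n → ℂ)
    (π : Equiv.Perm (Fin n)) :
    V * diagonal f * Vᴴ
      = (V.submatrix id ⇑π) * diagonal (f ∘ ⇑π) * (V.submatrix id ⇑π)ᴴ := by
  ext i j
  rw [conj_diag_apply, conj_diag_apply]
  rw [← Equiv.sum_comp π (fun k => V i k * f k * star (V j k))]
  exact Finset.sum_congr rfl fun k _ => by simp [Matrix.submatrix_apply]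

lemma submatrix_unitary {V : Matrix (Fin n) (Fin n) ℂ}
    (hV : V ∈ Matrix.unitaryGroup (Fin n) ℂ) (π : Equiv.Perm (Fin n)) :
    V.submatrix id ⇑π ∈ Matrix.unitaryGroup (Fin n) ℂ := by
  rw [Matrix.mem_unitaryGroup_iff']
  have h : Vᴴ * V = 1 := by
    rw [← Matrix.star_eq_conjTranspose]
    exact Matrix.mem_unitaryGroup_iff'.mp hV
  rw [Matrix.star_eq_conjTranspose, Matrix.conjTranspose_submatrix]
  have hid : (id : Fin n → Fin n) = ⇑(Equiv.refl (Fin n)) := rfl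
  rw [hid, Matrix.submatrix_mul_equiv Vᴴ V ⇑π (Equiv.refl (Fin n)) ⇑π, h,
    Matrix.submatrix_one_equiv]

lemma conj_mul {V : Matrix (Fin n) (Fin n) ℂ}
    (hV : V ∈ Matrix.unitaryGroup (Fin n) ℂ) (f g : Fin n → ℂ) :
    (V * diagonal f * Vᴴ) * (V * diagonal g * Vᴴ) = V * diagonal (f * g) * Vᴴ := by
  have h : Vᴴ * V = 1 := by
    rw [← Matrix.star_eq_conjTranspose]
    exact Matrix.mem_unitaryGroup_iff'.mp hV
  have key : diagonal f * (Vᴴ * (V * (diagonal g * Vᴴ))) = diagonal (f * g) * Vᴴ := by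
    rw [← mul_assoc Vᴴ V, h, one_mul, ← mul_assoc, diagonal_mul_diagonal]
    rfl
  simp only [mul_assoc]
  rw [key]

lemma conj_inv {V : Matrix (Fin n) (Fin n) ℂ}
    (hV : V ∈ Matrix.unitaryGroup (Fin n) ℂ) (f : Fin n → ℂ) (hf : ∀ i, f i ≠ 0) :
    (V * diagonal f * Vᴴ)⁻¹ = V * diagonal (fun i => (f i)⁻¹) * Vᴴ := by
  apply Matrix.inv_eq_right_inv
  rw [conj_mul hV]
  have hfg : (f * fun i => (f i)⁻¹) = fun _ => (1 : ℂ) :=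
    funext fun i => mul_inv_cancel₀ (hf i)
  rw [hfg, show (Matrix.diagonal fun _ => (1 : ℂ)) = 1 from Matrix.diagonal_one, mul_one]
  have h : V * Vᴴ = 1 := by
    rw [← Matrix.star_eq_conjTranspose]
    exact Matrix.mem_unitaryGroup_iff.mp hV
  exact h

lemma conj_trace {V : Matrix (Fin n) (Fin n) ℂ}
    (hV : V ∈ Matrix.unitaryGroup (Fin n) ℂ) (f : Fin n → ℂ) :
    (V * diagonal f * Vᴴ).trace = ∑ i, f i := by
  have h : Vᴴ * V = 1 := by
    rw [← Matrix.star_eq_conjTranspose]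
    exact Matrix.mem_unitaryGroup_iff'.mp hV
  rw [Matrix.trace_mul_comm, ← mul_assoc, h, one_mul, Matrix.trace_diagonal]

lemma posdef_conj {A V : Matrix (Fin n) (Fin n) ℂ} (hA : A.PosDef)
    (hV : V ∈ Matrix.unitaryGroup (Fin n) ℂ) :
    (V * A * Vᴴ).PosDef := by
  have hUV : V * Vᴴ = 1 := by
    rw [← Matrix.star_eq_conjTranspose]
    exact Matrix.mem_unitaryGroup_iff.mp hV
  refine hA.mul_mul_conjTranspose_same (fun a b h => ?_)
  have h2 := congrArg (fun v => Matrix.vecMul v Vᴴ) h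
  simpa [Matrix.vecMul_vecMul, hUV] using h2

lemma posdef_smul {A : Matrix (Fin n) (Fin n) ℂ} (hA : A.PosDef) {s : ℝ} (hs : 0 < s) :
    ((s : ℂ) • A).PosDef := by
  exact hA.smul (Complex.zero_lt_real.mpr hs)

/-- The key trace identity turning the objective into a parallel sum. -/
lemma trace_split (ρ τ : Matrix (Fin n) (Fin n) ℂ) (hρ : ρ.PosDef) (hτ : τ.PosDef)
    (s : ℝ) (hs : 0 < s) :
    (τ * ((msqrt τ)⁻¹ * ρ * (msqrt τ)⁻¹ + (s : ℂ) • 1)⁻¹).trace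
      = (s : ℂ)⁻¹ * τ.trace
        - ((s : ℂ) ^ 2)⁻¹ * ((ρ⁻¹ + (((s : ℂ) • τ))⁻¹)⁻¹).trace := by
  have hτpsd := hτ.posSemidef
  set S : Matrix (Fin n) (Fin n) ℂ := (hτpsd.1.eigenvectorUnitary : Matrix (Fin n) (Fin n) ℂ) *
      diagonal ((↑) ∘ (fun x : ℝ => Real.sqrt x) ∘ hτpsd.1.eigenvalues) *
      (star hτpsd.1.eigenvectorUnitary : Matrix (Fin n) (Fin n) ℂ) with hSdef
  have hms : msqrt τ = S := dif_pos hτpsd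
  have hSS : S * S = τ := by
    have hU := hτpsd.1.eigenvectorUnitary.2
    have hst : (star hτpsd.1.eigenvectorUnitary : Matrix (Fin n) (Fin n) ℂ)
        = (hτpsd.1.eigenvectorUnitary : Matrix (Fin n) (Fin n) ℂ)ᴴ := rfl
    have hspecτ : τ = (hτpsd.1.eigenvectorUnitary : Matrix (Fin n) (Fin n) ℂ) *
        diagonal (fun i => (hτpsd.1.eigenvalues i : ℂ)) *
        (hτpsd.1.eigenvectorUnitary : Matrix (Fin n) (Fin n) ℂ)ᴴ := hτpsd.1.spectral_theorem
    have hf : (((↑) ∘ (fun x : ℝ => Real.sqrt x) ∘ hτpsd.1.eigenvalues : Fin n → ℂ) *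
        ((↑) ∘ (fun x : ℝ => Real.sqrt x) ∘ hτpsd.1.eigenvalues : Fin n → ℂ))
        = fun i => (hτpsd.1.eigenvalues i : ℂ) := by
      funext i
      simp only [Pi.mul_apply, Function.comp_apply, ← Complex.ofReal_mul,
        Real.mul_self_sqrt (hτpsd.eigenvalues_nonneg i)]
    rw [hSdef, hst, conj_mul hU, hf, ← hspecτ]
  have hτdet : IsUnit τ.det := (Matrix.isUnit_iff_isUnit_det τ).mp hτ.isUnit
  have hSdet : IsUnit S.det := by
    have hdd : S.det * S.det = τ.det := by rw [← Matrix.det_mul, hSS]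
    exact isUnit_of_mul_isUnit_left (by rw [hdd]; exact hτdet)
  have hρdet : IsUnit ρ.det := (Matrix.isUnit_iff_isUnit_det ρ).mp hρ.isUnit
  set C : Matrix (Fin n) (Fin n) ℂ := (s : ℂ) • τ with hC
  have hCpd : C.PosDef := posdef_smul hτ hs
  have hCdet : IsUnit C.det := (Matrix.isUnit_iff_isUnit_det C).mp hCpd.isUnit
  set A : Matrix (Fin n) (Fin n) ℂ := ρ + C with hA
  have hApd : A.PosDef := hρ.add hCpd
  have hAdet : IsUnit A.det := (Matrix.isUnit_iff_isUnit_det A).mp hApd.isUnit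
  have hSinvS : S⁻¹ * S = 1 := Matrix.nonsing_inv_mul S hSdet
  have hSSinv : S * S⁻¹ = 1 := Matrix.mul_nonsing_inv S hSdet
  have hSinvinv : S⁻¹⁻¹ = S := Matrix.nonsing_inv_nonsing_inv S hSdet
  have hτSS : S⁻¹ * τ * S⁻¹ = 1 := by
    rw [← hSS, ← mul_assoc, hSinvS, one_mul, hSSinv]
  have hmid : S⁻¹ * ρ * S⁻¹ + (s : ℂ) • 1 = S⁻¹ * A * S⁻¹ := by
    have h1 : S⁻¹ * C * S⁻¹ = (s : ℂ) • 1 := by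
      rw [hC, Matrix.mul_smul, Matrix.smul_mul, hτSS]
    rw [hA, mul_add, add_mul, h1]
  have hinv3 : (S⁻¹ * A * S⁻¹)⁻¹ = S * (A⁻¹ * S) := by
    rw [Matrix.mul_inv_rev (S⁻¹ * A) S⁻¹, Matrix.mul_inv_rev S⁻¹ A, hSinvinv]
  have hSτS : S * τ * S = τ * τ := by
    rw [← hSS]
    simp only [mul_assoc]
  have hLtrace : (τ * (S⁻¹ * ρ * S⁻¹ + (s : ℂ) • 1)⁻¹).trace = ((τ * τ) * A⁻¹).trace := by
    rw [hmid, hinv3]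
    rw [show τ * (S * (A⁻¹ * S)) = (τ * S * A⁻¹) * S from by simp only [mul_assoc]]
    rw [Matrix.trace_mul_comm]
    rw [show S * (τ * S * A⁻¹) = (S * τ * S) * A⁻¹ from by simp only [mul_assoc]]
    rw [hSτS]
  have hsum : ρ⁻¹ + C⁻¹ = ρ⁻¹ * A * C⁻¹ := by
    rw [hA, mul_add, add_mul, Matrix.nonsing_inv_mul ρ hρdet, one_mul,
      mul_assoc ρ⁻¹ C C⁻¹, Matrix.mul_nonsing_inv C hCdet, mul_one, add_comm]
  have hpar : (ρ⁻¹ + C⁻¹)⁻¹ = C - C * (A⁻¹ * C) := by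
    rw [hsum, Matrix.mul_inv_rev, Matrix.mul_inv_rev,
      Matrix.nonsing_inv_nonsing_inv C hCdet, Matrix.nonsing_inv_nonsing_inv ρ hρdet]
    have hρeq : ρ = A - C := by rw [hA, add_sub_cancel_right]
    calc C * (A⁻¹ * ρ) = C * (A⁻¹ * (A - C)) := by rw [← hρeq]
      _ = C * (1 - A⁻¹ * C) := by rw [mul_sub, Matrix.nonsing_inv_mul A hAdet]
      _ = C - C * (A⁻¹ * C) := by rw [mul_sub, mul_one]
  have hCtr : C.trace = (s : ℂ) * τ.trace := by
    rw [hC, Matrix.trace_smul, smul_eq_mul]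
  have hCC : C * (A⁻¹ * C) = ((s : ℂ) * (s : ℂ)) • (τ * (A⁻¹ * τ)) := by
    rw [hC, Matrix.mul_smul, Matrix.smul_mul, Matrix.mul_smul, smul_smul]
  have hcomm : (τ * (A⁻¹ * τ)).trace = ((τ * τ) * A⁻¹).trace := by
    rw [show τ * (A⁻¹ * τ) = (τ * A⁻¹) * τ from by simp only [mul_assoc],
      Matrix.trace_mul_comm, ← mul_assoc]
  have hCCtr : (C * (A⁻¹ * C)).trace = (s : ℂ) * (s : ℂ) * ((τ * τ) * A⁻¹).trace := by
    rw [hCC, Matrix.trace_smul, smul_eq_mul, hcomm]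
  rw [hms, hLtrace, hpar]
  rw [Matrix.trace_sub, hCCtr, hCtr]
  have hsne : (s : ℂ) ≠ 0 := Complex.ofReal_ne_zero.mpr (ne_of_gt hs)
  field_simp
  ring

/-- Quadratic-form partial trace bound. -/
lemma sum_diag_quad (G : Matrix (Fin n) (Fin n) ℂ)
    (hG : G ∈ Matrix.unitaryGroup (Fin n) ℂ) (x : Fin n → ℝ)
    (hx : Antitone x) (hx0 : ∀ i, 0 ≤ x i) (S : Finset (Fin n)) :
    ∃ u : ℝ, (∑ j ∈ S, (Gᴴ * diagonal (fun i => (x i : ℂ)) * G) j j) = (u : ℂ)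
      ∧ u ≤ ∑ i : Fin n, if (i : ℕ) < S.card then x i else 0 := by
  classical
  have hcard : S.card ≤ n := by
    have := Finset.card_le_card (Finset.subset_univ S)
    simpa using this
  have hGG : G * Gᴴ = 1 := by
    rw [← Matrix.star_eq_conjTranspose]
    exact Matrix.mem_unitaryGroup_iff.mp hG
  have hG'G : Gᴴ * G = 1 := by
    rw [← Matrix.star_eq_conjTranspose]
    exact Matrix.mem_unitaryGroup_iff'.mp hG
  set a : Fin n → Fin n → ℝ := fun m j => Complex.normSq (G m j) with ha
  have hentry : ∀ j, (Gᴴ * diagonal (fun i => (x i : ℂ)) * G) j j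
      = ((∑ m, x m * a m j : ℝ) : ℂ) := by
    intro j
    rw [Matrix.mul_apply]
    push_cast
    refine Finset.sum_congr rfl fun m _ => ?_
    rw [Matrix.mul_diagonal, Matrix.conjTranspose_apply, Complex.star_def]
    calc (starRingEnd ℂ) (G m j) * (x m : ℂ) * G m j
        = (x m : ℂ) * ((starRingEnd ℂ) (G m j) * G m j) := by ring
      _ = (x m : ℂ) * ((Complex.normSq (G m j) : ℝ) : ℂ) := by
          rw [← Complex.normSq_eq_conj_mul_self]
      _ = (x m : ℂ) * ((a m j : ℝ) : ℂ) := rfl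
  have hrow : ∀ m, ∑ j, a m j = 1 := by
    intro m
    have h1 := congrFun (congrFun hGG m) m
    rw [Matrix.mul_apply] at h1
    have h2 : (∑ j, G m j * Gᴴ j m) = ((∑ j, a m j : ℝ) : ℂ) := by
      push_cast
      refine Finset.sum_congr rfl fun j _ => ?_
      rw [Matrix.conjTranspose_apply, Complex.star_def, Complex.mul_conj]
    rw [h2, show (1 : Matrix (Fin n) (Fin n) ℂ) m m = 1 from Matrix.one_apply_eq m] at h1
    exact_mod_cast h1
  have hcol : ∀ j, ∑ m, a m j = 1 := by
    intro j
    have h1 := congrFun (congrFun hG'G j) j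
    rw [Matrix.mul_apply] at h1
    have h2 : (∑ m, Gᴴ j m * G m j) = ((∑ m, a m j : ℝ) : ℂ) := by
      push_cast
      refine Finset.sum_congr rfl fun m _ => ?_
      rw [Matrix.conjTranspose_apply, Complex.star_def, mul_comm, Complex.mul_conj]
    rw [h2, show (1 : Matrix (Fin n) (Fin n) ℂ) j j = 1 from Matrix.one_apply_eq j] at h1
    exact_mod_cast h1
  refine ⟨∑ m, x m * ∑ j ∈ S, a m j, ?_, ?_⟩
  · rw [Finset.sum_congr rfl (fun j (_ : j ∈ S) => hentry j)]
    push_cast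
    rw [Finset.sum_comm]
    exact Finset.sum_congr rfl fun m _ => (Finset.mul_sum _ _ _).symm
  · refine weighted_le_topk S.card hcard x (fun m => ∑ j ∈ S, a m j) hx hx0 ?_ ?_ ?_
    · exact fun m => Finset.sum_nonneg fun j _ => Complex.normSq_nonneg _
    · intro m
      rw [← hrow m]
      exact Finset.sum_le_sum_of_subset_of_nonneg (Finset.subset_univ S)
        (fun j _ _ => Complex.normSq_nonneg _)
    · rw [Finset.sum_comm, Finset.sum_congr rfl fun j (_ : j ∈ S) => hcol j]
      simp

/-- Core spectral bound: the trace of the inverse of a sum of two positive matrices with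
known (sorted) spectra is at most the aligned sum of inverses. -/
lemma trace_inv_le (P Q : Matrix (Fin n) (Fin n) ℂ)
    (hP : P ∈ Matrix.unitaryGroup (Fin n) ℂ) (hQ : Q ∈ Matrix.unitaryGroup (Fin n) ℂ)
    (x y : Fin n → ℝ) (hx : Antitone x) (hy : Antitone y)
    (hx0 : ∀ i, 0 < x i) (hy0 : ∀ i, 0 < y i) :
    ∃ t : ℝ,
      ((P * diagonal (fun i => (x i : ℂ)) * Pᴴ
          + Q * diagonal (fun i => (y i : ℂ)) * Qᴴ)⁻¹).trace = (t : ℂ)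
      ∧ t ≤ ∑ i, (x i + y i)⁻¹ := by
  classical
  set X := P * diagonal (fun i => (x i : ℂ)) * Pᴴ with hX
  set Y := Q * diagonal (fun i => (y i : ℂ)) * Qᴴ with hY
  have hXpd : X.PosDef :=
    posdef_conj (Matrix.posDef_diagonal_iff.mpr fun i => Complex.zero_lt_real.mpr (hx0 i)) hP
  have hYpd : Y.PosDef :=
    posdef_conj (Matrix.posDef_diagonal_iff.mpr fun i => Complex.zero_lt_real.mpr (hy0 i)) hQ
  set Z := X + Y with hZ
  have hZpd : Z.PosDef := hXpd.add hYpd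
  have hZh : Z.IsHermitian := hZpd.1
  set μ : Fin n → ℝ := hZh.eigenvalues with hμ
  have hμpos : ∀ i, 0 < μ i := hZpd.eigenvalues_pos
  set EU : Matrix (Fin n) (Fin n) ℂ := (hZh.eigenvectorUnitary : Matrix (Fin n) (Fin n) ℂ)
    with hEU
  have hEUu : EU ∈ Matrix.unitaryGroup (Fin n) ℂ := hZh.eigenvectorUnitary.2
  have hspec : Z = EU * diagonal (fun i => (μ i : ℂ)) * EUᴴ := hZh.spectral_theorem
  have hdiag : EUᴴ * Z * EU = diagonal (fun i => (μ i : ℂ)) := by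
    have h1 : EUᴴ * EU = 1 := by
      rw [← Matrix.star_eq_conjTranspose]; exact Matrix.mem_unitaryGroup_iff'.mp hEUu
    rw [hspec]; simp only [← mul_assoc]; rw [h1, one_mul, mul_assoc, h1, mul_one]
  set π : Equiv.Perm (Fin n) := (Fin.revPerm).trans (Tuple.sort μ) with hπ
  have hvanti : Antitone (fun i => μ (π i)) := by
    intro i j hij
    have h1 : Fin.rev j ≤ Fin.rev i := Fin.rev_le_rev.mpr hij
    exact Tuple.monotone_sort μ h1
  have hvpos : ∀ i, 0 < μ (π i) := fun i => hμpos _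
  have hsub : ∀ S : Finset (Fin n), (∑ j ∈ S, μ j)
      ≤ (∑ i : Fin n, if (i : ℕ) < S.card then x i else 0)
        + (∑ i : Fin n, if (i : ℕ) < S.card then y i else 0) := by
    intro S
    have hform1 : EUᴴ * X * EU = (Pᴴ * EU)ᴴ * diagonal (fun i => (x i : ℂ)) * (Pᴴ * EU) := by
      simp only [hX, Matrix.conjTranspose_mul, Matrix.conjTranspose_conjTranspose, mul_assoc]
    have hform2 : EUᴴ * Y * EU = (Qᴴ * EU)ᴴ * diagonal (fun i => (y i : ℂ)) * (Qᴴ * EU) := by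
      simp only [hY, Matrix.conjTranspose_mul, Matrix.conjTranspose_conjTranspose, mul_assoc]
    have hPEU : Pᴴ * EU ∈ Matrix.unitaryGroup (Fin n) ℂ := by
      refine mul_mem ?_ hEUu
      rw [← Matrix.star_eq_conjTranspose]
      exact Unitary.star_mem hP
    have hQEU : Qᴴ * EU ∈ Matrix.unitaryGroup (Fin n) ℂ := by
      refine mul_mem ?_ hEUu
      rw [← Matrix.star_eq_conjTranspose]
      exact Unitary.star_mem hQ
    obtain ⟨u1, hu1, hu1le⟩ := sum_diag_quad (Pᴴ * EU) hPEU x hx (fun i => le_of_lt (hx0 i)) S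
    obtain ⟨u2, hu2, hu2le⟩ := sum_diag_quad (Qᴴ * EU) hQEU y hy (fun i => le_of_lt (hy0 i)) S
    have hsplit : ∀ j, ((μ j : ℝ) : ℂ)
        = (EUᴴ * X * EU) j j + (EUᴴ * Y * EU) j j := by
      intro j
      have h1 : (EUᴴ * Z * EU) j j = ((μ j : ℝ) : ℂ) := by
        rw [hdiag]; simp
      have h2 : EUᴴ * Z * EU = EUᴴ * X * EU + EUᴴ * Y * EU := by
        rw [hZ, mul_add, add_mul]
      rw [← h1, h2]
      rfl
    have hcast : ((∑ j ∈ S, μ j : ℝ) : ℂ) = ((u1 + u2 : ℝ) : ℂ) := by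
      push_cast
      calc (∑ j ∈ S, (μ j : ℂ))
          = ∑ j ∈ S, ((EUᴴ * X * EU) j j + (EUᴴ * Y * EU) j j) :=
            Finset.sum_congr rfl fun j _ => hsplit j
        _ = (∑ j ∈ S, (EUᴴ * X * EU) j j) + ∑ j ∈ S, (EUᴴ * Y * EU) j j :=
            Finset.sum_add_distrib
        _ = (u1 : ℂ) + (u2 : ℂ) := by rw [hform1, hform2, hu1, hu2]
    have heq : (∑ j ∈ S, μ j) = u1 + u2 := by exact_mod_cast hcast
    rw [heq]
    exact add_le_add hu1le hu2le
  have htrZ : Z.trace = ((∑ i, μ i : ℝ) : ℂ) := by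
    rw [hspec, conj_trace hEUu]
    push_cast
    rfl
  have htrXY : Z.trace = ((∑ i, (x i + y i) : ℝ) : ℂ) := by
    rw [hZ, Matrix.trace_add, hX, hY, conj_trace hP, conj_trace hQ]
    push_cast
    rw [← Finset.sum_add_distrib]
  have htot : (∑ i, μ (π i)) = ∑ i, (x i + y i) := by
    have h1 : (∑ i, μ (π i)) = ∑ i, μ i := Equiv.sum_comp π μ
    have h2 : ((∑ i, μ i : ℝ) : ℂ) = ((∑ i, (x i + y i) : ℝ) : ℂ) := by
      rw [← htrZ, htrXY]
    rw [h1]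
    exact_mod_cast h2
  have htrinv : Z⁻¹.trace = ((∑ i, (μ i)⁻¹ : ℝ) : ℂ) := by
    rw [hspec, conj_inv hEUu _ (fun i => Complex.ofReal_ne_zero.mpr (ne_of_gt (hμpos i))),
      conj_trace hEUu]
    push_cast
    rfl
  refine ⟨∑ i, (μ i)⁻¹, htrinv, ?_⟩
  have hps : ∀ k : ℕ, k ≤ n →
      (∑ i : Fin n, if (i : ℕ) < k then μ (π i) else 0)
        ≤ ∑ i : Fin n, if (i : ℕ) < k then x i + y i else 0 := by
    intro k hk
    set Sk : Finset (Fin n) := (Finset.univ.filter fun i : Fin n => (i : ℕ) < k).image ⇑π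
      with hSk
    have hfiltcard : (Finset.univ.filter fun i : Fin n => (i : ℕ) < k).card = k := by
      have hone : (∑ i : Fin n, if (i : ℕ) < k then (1 : ℝ) else 0) = (k : ℝ) := by
        rw [sum_fin_ite (fun _ => (1 : ℝ)) k hk]
        rw [Finset.sum_congr rfl
          (fun j hj => dif_pos (lt_of_lt_of_le (Finset.mem_range.mp hj) hk))]
        simp
      have hcardcast : ((Finset.univ.filter fun i : Fin n => (i : ℕ) < k).card : ℝ) = (k : ℝ) := by
        rw [← hone, Finset.sum_boole]
      exact_mod_cast hcardcast
    have hcardSk : Sk.card = k := by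
      rw [hSk, Finset.card_image_of_injective _ π.injective, hfiltcard]
    have hLHS : (∑ i : Fin n, if (i : ℕ) < k then μ (π i) else 0) = ∑ j ∈ Sk, μ j := by
      rw [hSk, Finset.sum_image (fun a _ b _ h => π.injective h), ← Finset.sum_filter]
    have hRHS : (∑ i : Fin n, if (i : ℕ) < k then x i + y i else 0)
        = (∑ i : Fin n, if (i : ℕ) < k then x i else 0)
          + (∑ i : Fin n, if (i : ℕ) < k then y i else 0) := by
      rw [← Finset.sum_add_distrib]
      exact Finset.sum_congr rfl fun i _ => by split <;> simp
    have := hsub Sk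
    rw [hcardSk] at this
    rw [hLHS, hRHS]
    exact this
  have hfinal := inv_sum_le (fun i => μ (π i)) (fun i => x i + y i) hvanti hvpos
      (fun i => add_pos (hx0 i) (hy0 i)) hps htot
  have hre : (∑ i, (μ (π i))⁻¹) = ∑ i, (μ i)⁻¹ :=
    Equiv.sum_comp π (fun j => (μ j)⁻¹)
  rw [hre] at hfinal
  exact hfinal

end Stmt6Aux

/-- unitary-orbit minimum of Tr[(U*σU)(B_UρB_U+sI)⁻¹], attained at W↓V↓*. -/
theorem stmt6 (n : ℕ) (hn : 0 < n)
    (ρ σ : Matrix (Fin n) (Fin n) ℂ)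
    (hρ : ρ.PosDef) (hσ : σ.PosDef)
    (hρtr : ρ.trace = 1) (hσtr : σ.trace = 1)
    (s : ℝ) (hs : 0 < s)
    (r d : Fin n → ℝ) (hr : Antitone r) (hd : Antitone d)
    (V W : Matrix (Fin n) (Fin n) ℂ)
    (hV : V ∈ Matrix.unitaryGroup (Fin n) ℂ)
    (hW : W ∈ Matrix.unitaryGroup (Fin n) ℂ)
    (hVρ : Vᴴ * ρ * V = Matrix.diagonal (fun i => (r i : ℂ)))
    (hWσ : Wᴴ * σ * W = Matrix.diagonal (fun i => (d i : ℂ)))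
    (B : Matrix (Fin n) (Fin n) ℂ → Matrix (Fin n) (Fin n) ℂ)
    (hB : ∀ U, B U = (msqrt (Uᴴ * σ * U))⁻¹) :
    (∀ U ∈ Matrix.unitaryGroup (Fin n) ℂ,
        (∑ i, d i ^ 2 / (r i + s * d i)) ≤ (((Uᴴ * σ * U) * (B U * ρ * B U + (s : ℂ) • 1)⁻¹).trace).re) ∧
    (((W * Vᴴ)ᴴ * σ * (W * Vᴴ)) * (B (W * Vᴴ) * ρ * B (W * Vᴴ) + (s : ℂ) • 1)⁻¹).trace = ((∑ i, d i ^ 2 / (r i + s * d i) : ℝ) : ℂ) := by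
  classical
  open Stmt6Aux in
  have hVV : V * Vᴴ = 1 := by
    rw [← Matrix.star_eq_conjTranspose]; exact Matrix.mem_unitaryGroup_iff.mp hV
  have hV'V : Vᴴ * V = 1 := by
    rw [← Matrix.star_eq_conjTranspose]; exact Matrix.mem_unitaryGroup_iff'.mp hV
  have hWW : W * Wᴴ = 1 := by
    rw [← Matrix.star_eq_conjTranspose]; exact Matrix.mem_unitaryGroup_iff.mp hW
  have hW'W : Wᴴ * W = 1 := by
    rw [← Matrix.star_eq_conjTranspose]; exact Matrix.mem_unitaryGroup_iff'.mp hW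
  have hVst : Vᴴ ∈ Matrix.unitaryGroup (Fin n) ℂ := by
    rw [← Matrix.star_eq_conjTranspose]; exact Unitary.star_mem hV
  have hWst : Wᴴ ∈ Matrix.unitaryGroup (Fin n) ℂ := by
    rw [← Matrix.star_eq_conjTranspose]; exact Unitary.star_mem hW
  have hρdiag : ρ = V * diagonal (fun i => (r i : ℂ)) * Vᴴ := by
    rw [← hVρ]
    calc ρ = (V * Vᴴ) * ρ * (V * Vᴴ) := by rw [hVV, one_mul, mul_one]
      _ = V * (Vᴴ * ρ * V) * Vᴴ := by simp only [mul_assoc]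
  have hσdiag : σ = W * diagonal (fun i => (d i : ℂ)) * Wᴴ := by
    rw [← hWσ]
    calc σ = (W * Wᴴ) * σ * (W * Wᴴ) := by rw [hWW, one_mul, mul_one]
      _ = W * (Wᴴ * σ * W) * Wᴴ := by simp only [mul_assoc]
  have hdiagρpd : (diagonal fun i => (r i : ℂ)).PosDef := by
    rw [← hVρ]
    have := posdef_conj hρ hVst
    rwa [Matrix.conjTranspose_conjTranspose] at this
  have hdiagσpd : (diagonal fun i => (d i : ℂ)).PosDef := by
    rw [← hWσ]
    have := posdef_conj hσ hWst
    rwa [Matrix.conjTranspose_conjTranspose] at this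
  have hrpos : ∀ i, 0 < r i := fun i =>
    Complex.zero_lt_real.mp (Matrix.posDef_diagonal_iff.mp hdiagρpd i)
  have hdpos : ∀ i, 0 < d i := fun i =>
    Complex.zero_lt_real.mp (Matrix.posDef_diagonal_iff.mp hdiagσpd i)
  have hdsum : ∑ i, d i = 1 := by
    have h1 : σ.trace = ((∑ i, d i : ℝ) : ℂ) := by
      rw [hσdiag, conj_trace hW]
      push_cast
      rfl
    rw [hσtr] at h1
    exact_mod_cast h1.symm
  have hsne : s ≠ 0 := ne_of_gt hs
  -- the scalar identity for the target
  have htarget : (∑ i, d i ^ 2 / (r i + s * d i))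
      = s⁻¹ - ((s ^ 2)⁻¹) * (∑ i, ((r i)⁻¹ + (s * d i)⁻¹)⁻¹) := by
    have hterm : ∀ i, d i ^ 2 / (r i + s * d i)
        = s⁻¹ * d i - (s ^ 2)⁻¹ * ((r i)⁻¹ + (s * d i)⁻¹)⁻¹ := by
      intro i
      have h1 := hrpos i
      have h2 := hdpos i
      have h3 : 0 < r i + s * d i := by positivity
      field_simp
      ring
    rw [Finset.sum_congr rfl fun i _ => hterm i, Finset.sum_sub_distrib,
      ← Finset.mul_sum, ← Finset.mul_sum, hdsum, mul_one]
  -- sum over the reversal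
  have hrevsum : (∑ i, ((r (Fin.revPerm i))⁻¹ + (s * d (Fin.revPerm i))⁻¹)⁻¹)
      = ∑ i, ((r i)⁻¹ + (s * d i)⁻¹)⁻¹ :=
    Equiv.sum_comp Fin.revPerm (fun j => ((r j)⁻¹ + (s * d j)⁻¹)⁻¹)
  have hxanti : Antitone (fun i => (r (Fin.revPerm i))⁻¹) := by
    intro i j hij
    have h1 : Fin.rev j ≤ Fin.rev i := Fin.rev_le_rev.mpr hij
    have h2 : r (Fin.revPerm i) ≤ r (Fin.revPerm j) := hr h1
    exact inv_anti₀ (hrpos _) h2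
  have hyanti : Antitone (fun i => (s * d (Fin.revPerm i))⁻¹) := by
    intro i j hij
    have h1 : Fin.rev j ≤ Fin.rev i := Fin.rev_le_rev.mpr hij
    have h2 : s * d (Fin.revPerm i) ≤ s * d (Fin.revPerm j) :=
      mul_le_mul_of_nonneg_left (hd h1) (le_of_lt hs)
    exact inv_anti₀ (mul_pos hs (hdpos _)) h2
  have hxpos : ∀ i, 0 < (r (Fin.revPerm i))⁻¹ := fun i => inv_pos.mpr (hrpos _)
  have hypos : ∀ i, 0 < (s * d (Fin.revPerm i))⁻¹ := fun i => inv_pos.mpr (mul_pos hs (hdpos _))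
  have hρinv : ρ⁻¹ = V * diagonal (fun i => (((r i)⁻¹ : ℝ) : ℂ)) * Vᴴ := by
    rw [hρdiag, conj_inv hV _ (fun i => Complex.ofReal_ne_zero.mpr (ne_of_gt (hrpos i)))]
    simp only [Complex.ofReal_inv]
  -- the generic computation for a unitary U
  have main : ∀ U ∈ Matrix.unitaryGroup (Fin n) ℂ,
      ∃ t : ℝ,
        (((Uᴴ * σ * U) * (B U * ρ * B U + (s : ℂ) • 1)⁻¹).trace)
          = (((s⁻¹ - (s ^ 2)⁻¹ * t : ℝ)) : ℂ)
        ∧ t ≤ ∑ i, ((r i)⁻¹ + (s * d i)⁻¹)⁻¹ := by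
    intro U hU
    have hUst : Uᴴ ∈ Matrix.unitaryGroup (Fin n) ℂ := by
      rw [← Matrix.star_eq_conjTranspose]; exact Unitary.star_mem hU
    have hUU : U * Uᴴ = 1 := by
      rw [← Matrix.star_eq_conjTranspose]; exact Matrix.mem_unitaryGroup_iff.mp hU
    have hτdiag : Uᴴ * σ * U = (Uᴴ * W) * diagonal (fun i => (d i : ℂ)) * (Uᴴ * W)ᴴ := by
      rw [hσdiag]
      simp only [Matrix.conjTranspose_mul, Matrix.conjTranspose_conjTranspose, mul_assoc]
    have hUW : Uᴴ * W ∈ Matrix.unitaryGroup (Fin n) ℂ := mul_mem hUst hW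
    have hτpd : (Uᴴ * σ * U).PosDef := by
      rw [hτdiag]
      exact posdef_conj hdiagσpd hUW
    have hτtr : (Uᴴ * σ * U).trace = 1 := by
      rw [Matrix.trace_mul_comm (Uᴴ * σ) U, ← mul_assoc, hUU, one_mul, hσtr]
    have hsmulτinv : ((s : ℂ) • (Uᴴ * σ * U))⁻¹
        = (Uᴴ * W) * diagonal (fun i => (((s * d i)⁻¹ : ℝ) : ℂ)) * (Uᴴ * W)ᴴ := by
      have hd2 : (s : ℂ) • (diagonal fun i => ((d i : ℝ) : ℂ))
          = diagonal (fun i => ((s * d i : ℝ) : ℂ)) := by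
        ext i j
        rcases eq_or_ne i j with h | h
        · subst h
          simp [Complex.ofReal_mul]
        · simp [Matrix.diagonal_apply_ne _ h]
      have hsm : (s : ℂ) • (Uᴴ * σ * U)
          = (Uᴴ * W) * diagonal (fun i => ((s * d i : ℝ) : ℂ)) * (Uᴴ * W)ᴴ := by
        rw [hτdiag, mul_assoc, ← Matrix.mul_smul, ← Matrix.smul_mul, hd2, ← mul_assoc]
      rw [hsm, conj_inv hUW _ (fun i => Complex.ofReal_ne_zero.mpr
        (ne_of_gt (mul_pos hs (hdpos i))))]
      simp only [Complex.ofReal_inv]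
    obtain ⟨t, ht, htle⟩ := trace_inv_le
      (V.submatrix id ⇑(Fin.revPerm)) ((Uᴴ * W).submatrix id ⇑(Fin.revPerm))
      (submatrix_unitary hV Fin.revPerm) (submatrix_unitary hUW Fin.revPerm)
      (fun i => (r (Fin.revPerm i))⁻¹) (fun i => (s * d (Fin.revPerm i))⁻¹)
      hxanti hyanti hxpos hypos
    refine ⟨t, ?_, by rw [← hrevsum]; exact htle⟩
    rw [hB, trace_split ρ (Uᴴ * σ * U) hρ hτpd s hs, hτtr]
    have hXeq := conj_diag_reindex V (fun i => (((r i)⁻¹ : ℝ) : ℂ)) Fin.revPerm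
    have hYeq := conj_diag_reindex (Uᴴ * W) (fun i => (((s * d i)⁻¹ : ℝ) : ℂ)) Fin.revPerm
    have hZeq : ρ⁻¹ + ((s : ℂ) • (Uᴴ * σ * U))⁻¹
        = (V.submatrix id ⇑(Fin.revPerm))
            * diagonal (fun i => ((((r (Fin.revPerm i))⁻¹ : ℝ)) : ℂ))
            * (V.submatrix id ⇑(Fin.revPerm))ᴴ
          + ((Uᴴ * W).submatrix id ⇑(Fin.revPerm))
            * diagonal (fun i => ((((s * d (Fin.revPerm i))⁻¹ : ℝ)) : ℂ))
            * ((Uᴴ * W).submatrix id ⇑(Fin.revPerm))ᴴ := by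
      rw [hρinv, hsmulτinv, hXeq, hYeq]
      rfl
    rw [hZeq, ht]
    push_cast
    ring
  constructor
  · intro U hU
    obtain ⟨t, ht, htle⟩ := main U hU
    rw [ht, Complex.ofReal_re, htarget]
    have hc : (0:ℝ) < (s ^ 2)⁻¹ := by positivity
    nlinarith [htle, hc]
  · have hU0 : W * Vᴴ ∈ Matrix.unitaryGroup (Fin n) ℂ := mul_mem hW hVst
    obtain ⟨t, ht, htle⟩ := main (W * Vᴴ) hU0
    -- For this U the bound is exact: recompute the trace directly.
    have hτ0diag : (W * Vᴴ)ᴴ * σ * (W * Vᴴ) = V * diagonal (fun i => (d i : ℂ)) * Vᴴ := by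
      rw [hσdiag]
      calc (W * Vᴴ)ᴴ * (W * diagonal (fun i => (d i : ℂ)) * Wᴴ) * (W * Vᴴ)
          = V * ((Wᴴ * W) * (diagonal (fun i => (d i : ℂ)) * ((Wᴴ * W) * Vᴴ))) := by
            simp only [Matrix.conjTranspose_mul, Matrix.conjTranspose_conjTranspose, mul_assoc]
        _ = V * diagonal (fun i => (d i : ℂ)) * Vᴴ := by
            rw [hW'W, one_mul, one_mul, mul_assoc]
    have hτ0pd : ((W * Vᴴ)ᴴ * σ * (W * Vᴴ)).PosDef := by
      rw [hτ0diag]; exact posdef_conj hdiagσpd hV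
    have hτ0tr : ((W * Vᴴ)ᴴ * σ * (W * Vᴴ)).trace = 1 := by
      rw [hτ0diag, conj_trace hV]
      have : (∑ i, (d i : ℂ)) = ((∑ i, d i : ℝ) : ℂ) := by push_cast; rfl
      rw [this, hdsum, Complex.ofReal_one]
    have hsmulτ0inv : ((s : ℂ) • ((W * Vᴴ)ᴴ * σ * (W * Vᴴ)))⁻¹
        = V * diagonal (fun i => (((s * d i)⁻¹ : ℝ) : ℂ)) * Vᴴ := by
      have hd2 : (s : ℂ) • (diagonal fun i => ((d i : ℝ) : ℂ))
          = diagonal (fun i => ((s * d i : ℝ) : ℂ)) := by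
        ext i j
        rcases eq_or_ne i j with h | h
        · subst h
          simp [Complex.ofReal_mul]
        · simp [Matrix.diagonal_apply_ne _ h]
      have hsm : (s : ℂ) • ((W * Vᴴ)ᴴ * σ * (W * Vᴴ))
          = V * diagonal (fun i => ((s * d i : ℝ) : ℂ)) * Vᴴ := by
        rw [hτ0diag, mul_assoc, ← Matrix.mul_smul, ← Matrix.smul_mul, hd2, ← mul_assoc]
      rw [hsm, conj_inv hV _ (fun i => Complex.ofReal_ne_zero.mpr
        (ne_of_gt (mul_pos hs (hdpos i))))]
      simp only [Complex.ofReal_inv]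
    have hZ0 : ρ⁻¹ + ((s : ℂ) • ((W * Vᴴ)ᴴ * σ * (W * Vᴴ)))⁻¹
        = V * diagonal (fun i => ((((r i)⁻¹ + (s * d i)⁻¹ : ℝ)) : ℂ)) * Vᴴ := by
      rw [hρinv, hsmulτ0inv, ← add_mul, ← mul_add, Matrix.diagonal_add]
      congr 2
      funext i
      push_cast
      rfl
    have hZ0inv : (ρ⁻¹ + ((s : ℂ) • ((W * Vᴴ)ᴴ * σ * (W * Vᴴ)))⁻¹)⁻¹
        = V * diagonal (fun i => ((((r i)⁻¹ + (s * d i)⁻¹)⁻¹ : ℝ) : ℂ)) * Vᴴ := by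
      rw [hZ0, conj_inv hV _ (fun i => Complex.ofReal_ne_zero.mpr (ne_of_gt
        (add_pos (inv_pos.mpr (hrpos i)) (inv_pos.mpr (mul_pos hs (hdpos i))))))]
      simp only [Complex.ofReal_inv]
    have htr0 : ((ρ⁻¹ + ((s : ℂ) • ((W * Vᴴ)ᴴ * σ * (W * Vᴴ)))⁻¹)⁻¹).trace
        = ((∑ i, ((r i)⁻¹ + (s * d i)⁻¹)⁻¹ : ℝ) : ℂ) := by
      rw [hZ0inv, conj_trace hV]
      push_cast
      rfl
    rw [hB, trace_split ρ _ hρ hτ0pd s hs, hτ0tr, htr0, htarget]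
    push_cast
    ring
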